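/- Cluster sampling representation of recall: if a random true cluster c is drawn from 𝒞 with probabilities proportional to p_c > 0, then R = E[ f(c, 𝒞̂)/p_c ] / E[ C(|c|, 2)/p_c ], provided 𝒞 has at least one non-singleton cluster. -/

import Mathlib

open Finset

/-- The set of unordered pairs of distinct elements lying in a common block of `P`. -/
def clPairs {α : Type*} [DecidableEq α] (P : Finset (Finset α)) : Finset (Sym2 α) :=
  (P.sup fun c => c.sym2).filter (fun p => ¬ p.IsDiag)

/-- The block of the partition `P` containing `i`. -/
def partOf {α : Type*} [DecidableEq α] (P : Finset (Finset α)) (i : α) : Finset α :=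
  (P.filter (fun c => i ∈ c)).sup id

/-- `f(c, 𝒞̂) = Σ_{ĉ ∈ 𝒞̂} C(|c ∩ ĉ|, 2)`, real-valued. -/
noncomputable def ffun {α : Type*} [DecidableEq α] (Cp : Finset (Finset α)) (c : Finset α) : ℝ :=
  ∑ d ∈ Cp, ((c ∩ d).card.choose 2 : ℝ)

/-- `g(c, 𝒞̂) = f(c, 𝒞̂) / Σ_{ĉ ∈ 𝒞̂} C(|ĉ|, 2)`. -/
noncomputable def gfun {α : Type*} [DecidableEq α] (Cp : Finset (Finset α)) (c : Finset α) : ℝ :=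
  ffun Cp c / (∑ d ∈ Cp, (d.card.choose 2 : ℝ))

lemma card_filter_not_isDiag {α : Type*} [DecidableEq α] (s : Finset α) :
    (s.sym2.filter (fun p => ¬ p.IsDiag)).card = s.card.choose 2 := by
  have hdiag : s.sym2.filter (fun p => p.IsDiag) = s.image Sym2.diag := by
    ext p
    induction p with
    | _ a b =>
      simp only [mem_filter, Finset.mk_mem_sym2_iff, Sym2.mk_isDiag_iff, mem_image]
      constructor
      · rintro ⟨⟨ha, hb⟩, rfl⟩; exact ⟨a, ha, rfl⟩
      · rintro ⟨x, hx, h⟩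
        have : x = a ∧ x = b := by
          rw [Sym2.diag, Sym2.eq_iff] at h
          tauto
        obtain ⟨rfl, rfl⟩ := this
        exact ⟨⟨hx, hx⟩, rfl⟩
  have h1 : (s.sym2.filter (fun p => ¬ p.IsDiag)).card
      = s.sym2.card - (s.sym2.filter (fun p => p.IsDiag)).card := by
    rw [Finset.filter_not, card_sdiff_of_subset (filter_subset _ _)]
  rw [h1, hdiag, Finset.card_image_of_injective _ Sym2.diag_injective,
    Finset.card_sym2, Nat.choose_succ_succ, Nat.choose_one_right, Nat.add_sub_cancel_left]

lemma disj_sym2 {α : Type*} [DecidableEq α] {c d : Finset α} (h : Disjoint c d) :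
    Disjoint c.sym2 d.sym2 := by
  rw [Finset.disjoint_left]
  intro p hc hd
  induction p with
  | _ a b =>
    rw [Finset.mk_mem_sym2_iff] at hc hd
    exact (Finset.disjoint_left.1 h) hc.1 hd.1

lemma clPairs_card {α : Type*} [DecidableEq α] {D : Finset α} (C : Finpartition D) :
    (clPairs C.parts).card = ∑ c ∈ C.parts, c.card.choose 2 := by
  unfold clPairs
  rw [Finset.sup_eq_biUnion, Finset.filter_biUnion, Finset.card_biUnion]
  · exact Finset.sum_congr rfl fun c _ => card_filter_not_isDiag c
  · intro x hx y hy hxy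
    exact Finset.disjoint_filter_filter (disj_sym2 (C.disjoint hx hy hxy))

lemma clPairs_inter_card {α : Type*} [DecidableEq α] {D : Finset α} (C Cp : Finpartition D) :
    (clPairs C.parts ∩ clPairs Cp.parts).card
      = ∑ c ∈ C.parts, ∑ d ∈ Cp.parts, (c ∩ d).card.choose 2 := by
  have key : clPairs C.parts ∩ clPairs Cp.parts
      = (C.parts ×ˢ Cp.parts).biUnion
          (fun cd => ((cd.1 ∩ cd.2).sym2).filter (fun p => ¬ p.IsDiag)) := by
    ext p
    induction p with
    | _ a b =>
      simp only [Finset.mem_inter, clPairs, Finset.mem_filter, Finset.mem_sup,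
        Finset.mem_biUnion, Finset.mk_mem_sym2_iff, Finset.mem_product, Prod.exists]
      constructor
      · rintro ⟨⟨⟨c, hc, hac⟩, hd1⟩, ⟨d, hd, had⟩, _⟩
        exact ⟨c, d, ⟨hc, hd⟩, ⟨⟨hac.1, had.1⟩, hac.2, had.2⟩, hd1⟩
      · rintro ⟨c, d, ⟨hc, hd⟩, ⟨⟨hac, had⟩, hbc, hbd⟩, hnd⟩
        exact ⟨⟨⟨c, hc, hac, hbc⟩, hnd⟩, ⟨d, hd, had, hbd⟩, hnd⟩
  rw [key, Finset.card_biUnion, Finset.sum_product]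
  · exact Finset.sum_congr rfl fun c _ => Finset.sum_congr rfl fun d _ =>
      card_filter_not_isDiag _
  · rintro ⟨c, d⟩ hcd ⟨c', d'⟩ hcd' hne
    rw [Finset.mem_coe, Finset.mem_product] at hcd hcd'
    apply Finset.disjoint_filter_filter
    by_cases hc : c = c'
    · subst hc
      have hd : d ≠ d' := fun h => hne (by simp [h])
      exact disj_sym2 ((Cp.disjoint hcd.2 hcd'.2 hd).mono inter_subset_right
        inter_subset_right)
    · exact disj_sym2 ((C.disjoint hcd.1 hcd'.1 hc).mono inter_subset_left
        inter_subset_left)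

theorem stmt6 {α : Type*} [DecidableEq α] (D : Finset α) (C Cp : Finpartition D)
    (w : Finset α → ℝ) (hw : ∀ c ∈ C.parts, 0 < w c)
    (hT : 0 < ∑ c ∈ C.parts, (c.card.choose 2 : ℝ))
    (π : ℝ) (hπ : π = 1 / ∑ c ∈ C.parts, w c) :
    ((clPairs C.parts ∩ clPairs Cp.parts).card : ℝ) / (clPairs C.parts).card
      = (∑ c ∈ C.parts, (π * w c) * (ffun Cp.parts c / w c))
          / (∑ c ∈ C.parts, (π * w c) * ((c.card.choose 2 : ℝ) / w c)) := by
  have hne : C.parts.Nonempty := by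
    rcases Finset.eq_empty_or_nonempty C.parts with h | h
    · rw [h, Finset.sum_empty] at hT; exact absurd hT (lt_irrefl 0)
    · exact h
  have hS : 0 < ∑ c ∈ C.parts, w c := Finset.sum_pos hw hne
  have hπ0 : π ≠ 0 := by rw [hπ]; positivity
  have h1 : ∀ c ∈ C.parts, (π * w c) * (ffun Cp.parts c / w c) = π * ffun Cp.parts c := by
    intro c hc
    have : w c ≠ 0 := (hw c hc).ne'
    field_simp
  have h2 : ∀ c ∈ C.parts, (π * w c) * ((c.card.choose 2 : ℝ) / w c)
      = π * (c.card.choose 2 : ℝ) := by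
    intro c hc
    have : w c ≠ 0 := (hw c hc).ne'
    field_simp
  rw [Finset.sum_congr rfl h1, Finset.sum_congr rfl h2, ← Finset.mul_sum, ← Finset.mul_sum,
    mul_div_mul_left _ _ hπ0, clPairs_inter_card, clPairs_card]
  push_cast
  congr 1
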